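/- Let S be a ring, R a maximal subring of S, and I a nonzero two-sided ideal of S with R ∩ I = {0}. Then S is semiprime if and only if R is semiprime and I·I ≠ 0. -/

import Mathlib

/-- `R` is a maximal subring of `S`. -/
def IsMaximalSubring {S : Type*} [Ring S] (R : Subring S) : Prop :=
  R ≠ ⊤ ∧ ∀ T : Subring S, R ≤ T → T = R ∨ T = ⊤

/-- A ring `A` is semiprime if `aAa = 0` implies `a = 0`. -/
def IsSemiprimeRing (A : Type*) [Ring A] : Prop :=
  ∀ a : A, (∀ x : A, a * x * a = 0) → a = 0

section helpers
variable {S : Type*} [Ring S]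

/-- Products of closures vanish if products of generators vanish. -/
private lemma closure_prod_zero {s t : Set S} (h : ∀ a ∈ s, ∀ b ∈ t, a * b = 0) :
    ∀ a ∈ AddSubgroup.closure s, ∀ b ∈ AddSubgroup.closure t, a * b = 0 := by
  intro a ha
  induction ha using AddSubgroup.closure_induction with
  | mem x hx =>
    intro b hb
    induction hb using AddSubgroup.closure_induction with
    | mem y hy => exact h x hx y hy
    | zero => exact mul_zero x
    | add y z _ _ ih1 ih2 => rw [mul_add, ih1, ih2, add_zero]
    | neg y _ ih => rw [mul_neg, ih, neg_zero]
  | zero => intro b _; exact zero_mul b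
  | add x y _ _ ih1 ih2 => intro b hb; rw [add_mul, ih1 b hb, ih2 b hb, add_zero]
  | neg x _ ih => intro b hb; rw [neg_mul, ih b hb, neg_zero]

private lemma closure_mem_ideal {s : Set S} (I : TwoSidedIdeal S) (h : ∀ g ∈ s, g ∈ I) :
    ∀ x ∈ AddSubgroup.closure s, x ∈ I := by
  intro x hx
  induction hx using AddSubgroup.closure_induction with
  | mem y hy => exact h y hy
  | zero => exact I.zero_mem
  | add y z _ _ ih1 ih2 => exact I.add_mem ih1 ih2
  | neg y _ ih => exact I.neg_mem ih

private lemma closure_stable_left {s : Set S} (r : S)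
    (h : ∀ g ∈ s, r * g ∈ AddSubgroup.closure s) :
    ∀ x ∈ AddSubgroup.closure s, r * x ∈ AddSubgroup.closure s := by
  intro x hx
  induction hx using AddSubgroup.closure_induction with
  | mem y hy => exact h y hy
  | zero => rw [mul_zero]; exact AddSubgroup.zero_mem _
  | add y z _ _ ih1 ih2 => rw [mul_add]; exact AddSubgroup.add_mem _ ih1 ih2
  | neg y _ ih => rw [mul_neg]; exact AddSubgroup.neg_mem _ ih

private lemma closure_stable_right {s : Set S} (r : S)
    (h : ∀ g ∈ s, g * r ∈ AddSubgroup.closure s) :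
    ∀ x ∈ AddSubgroup.closure s, x * r ∈ AddSubgroup.closure s := by
  intro x hx
  induction hx using AddSubgroup.closure_induction with
  | mem y hy => exact h y hy
  | zero => rw [zero_mul]; exact AddSubgroup.zero_mem _
  | add y z _ _ ih1 ih2 => rw [add_mul]; exact AddSubgroup.add_mem _ ih1 ih2
  | neg y _ ih => rw [neg_mul]; exact AddSubgroup.neg_mem _ ih

/-- Dichotomy coming from maximality: an additive subgroup of `I` which is stable
under multiplication by `R` on both sides and multiplicatively closed is either `0`
or all of `I` (in which case `R + M = S`). -/
private lemma key_dichotomy (R : Subring S) (hmax : IsMaximalSubring R)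
    (I : TwoSidedIdeal S) (hRI : ∀ x : S, x ∈ R → x ∈ I → x = 0)
    (M : AddSubgroup S) (hMI : ∀ m ∈ M, m ∈ I)
    (hRM : ∀ r ∈ R, ∀ m ∈ M, r * m ∈ M) (hMR : ∀ m ∈ M, ∀ r ∈ R, m * r ∈ M)
    (hMM : ∀ m ∈ M, ∀ m' ∈ M, m * m' ∈ M) :
    (∀ m ∈ M, m = 0) ∨ (∀ s : S, ∃ r ∈ R, ∃ m ∈ M, s = r + m) := by
  set T : Subring S :=
    { carrier := {s : S | ∃ r ∈ R, ∃ m ∈ M, s = r + m}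
      zero_mem' := ⟨0, R.zero_mem, 0, M.zero_mem, by simp⟩
      one_mem' := ⟨1, R.one_mem, 0, M.zero_mem, by simp⟩
      add_mem' := by
        rintro x y ⟨r, hr, m, hm, rfl⟩ ⟨r', hr', m', hm', rfl⟩
        exact ⟨r + r', R.add_mem hr hr', m + m', M.add_mem hm hm', by abel⟩
      neg_mem' := by
        rintro x ⟨r, hr, m, hm, rfl⟩
        exact ⟨-r, R.neg_mem hr, -m, M.neg_mem hm, by abel⟩
      mul_mem' := by
        rintro x y ⟨r, hr, m, hm, rfl⟩ ⟨r', hr', m', hm', rfl⟩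
        refine ⟨r * r', R.mul_mem hr hr', r * m' + m * r' + m * m',
          M.add_mem (M.add_mem (hRM r hr m' hm') (hMR m hm r' hr')) (hMM m hm m' hm'), ?_⟩
        rw [add_mul, mul_add, mul_add]
        abel } with hT
  have hRT : R ≤ T := fun r hr => ⟨r, hr, 0, M.zero_mem, (add_zero r).symm⟩
  rcases hmax.2 T hRT with h | h
  · left
    intro m hm
    have : m ∈ T := ⟨0, R.zero_mem, m, hm, (zero_add m).symm⟩
    rw [h] at this
    exact hRI m this (hMI m hm)
  · right
    intro s
    have : s ∈ T := by rw [h]; trivial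
    exact this

end helpers

/-- Let `R` be a maximal subring of `S` and `I` a nonzero two-sided
ideal of `S` with `R ∩ I = {0}`.  Then `S` is semiprime iff `R` is semiprime and
`I·I ≠ 0`. -/
theorem stmt9 {S : Type*} [Ring S] (R : Subring S) (hmax : IsMaximalSubring R)
    (I : TwoSidedIdeal S) (hI : I ≠ ⊥)
    (hRI : ∀ x : S, x ∈ R → x ∈ I → x = 0) :
    IsSemiprimeRing S ↔
      ((∀ a ∈ R, (∀ x ∈ R, a * x * a = 0) → a = 0) ∧ ∃ x ∈ I, ∃ y ∈ I, x * y ≠ 0) := by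
  classical
  -- a nonzero element of I
  have hex : ∃ i, i ∈ I ∧ i ≠ 0 := by
    by_contra hc
    push_neg at hc
    exact hI (SetLike.ext fun x => by
      rw [TwoSidedIdeal.mem_bot]
      exact ⟨fun hx => hc x hx, fun hx => hx ▸ I.zero_mem⟩)
  -- the additive subgroup underlying I
  set J : AddSubgroup S :=
    { carrier := {x : S | x ∈ I}
      zero_mem' := I.zero_mem
      add_mem' := fun ha hb => I.add_mem ha hb
      neg_mem' := fun ha => I.neg_mem ha } with hJ
  -- decomposition S = R + I
  have hdec : ∀ s : S, ∃ r ∈ R, ∃ m, m ∈ I ∧ s = r + m := by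
    rcases key_dichotomy R hmax I hRI J (fun m hm => hm)
      (fun r _ m hm => I.mul_mem_left r m hm)
      (fun m hm r _ => I.mul_mem_right m r hm)
      (fun m _ m' hm' => I.mul_mem_left m m' hm') with h | h
    · obtain ⟨i, hi, hi0⟩ := hex
      exact absurd (h i hi) hi0
    · exact h
  constructor
  · -- forward direction : S semiprime
    intro hS
    -- first: I·I ≠ 0
    have hII : ∃ x ∈ I, ∃ y ∈ I, x * y ≠ 0 := by
      by_contra hcon
      push_neg at hcon
      obtain ⟨i, hi, hi0⟩ := hex
      apply hi0
      apply hS i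
      intro x
      obtain ⟨r, hr, m, hm, rfl⟩ := hdec x
      have h1 : i * r * i = 0 := by
        rw [mul_assoc]; exact hcon i hi (r * i) (I.mul_mem_left r i hi)
      have h2 : i * m * i = 0 := by
        rw [mul_assoc]; exact hcon i hi (m * i) (I.mul_mem_right m i hm)
      rw [mul_add, add_mul, h1, h2, add_zero]
    refine ⟨?_, hII⟩
    -- now: R semiprime
    intro a ha h
    set gen : Set S :=
      {y : S | ∃ u ∈ R, ∃ v ∈ R, ∃ t, t ∈ I ∧ ∃ u' ∈ R, ∃ v' ∈ R,
        y = u * a * v * t * (u' * a * v')} with hgen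
    have hgenI : ∀ g ∈ gen, g ∈ I := by
      rintro g ⟨u, hu, v, hv, t, ht, u', hu', v', hv', rfl⟩
      exact I.mul_mem_right _ _ (I.mul_mem_left _ _ ht)
    have hgenzero : ∀ g ∈ gen, ∀ g' ∈ gen, g * g' = 0 := by
      rintro g ⟨u, hu, v, hv, t, ht, u', hu', v', hv', rfl⟩
        g' ⟨w, hw, x, hx, t', ht', w', hw', x', hx', rfl⟩
      have hz : a * (v' * w) * a = 0 := h (v' * w) (R.mul_mem hv' hw)
      calc u * a * v * t * (u' * a * v') * (w * a * x * t' * (w' * a * x'))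
          = u * a * v * t * u' * (a * (v' * w) * a) * (x * t' * (w' * a * x')) := by
            simp only [mul_assoc]
        _ = 0 := by rw [hz, mul_zero, zero_mul]
    rcases key_dichotomy R hmax I hRI (AddSubgroup.closure gen)
      (closure_mem_ideal I hgenI)
      (fun r hr => closure_stable_left r (by
        rintro g ⟨u, hu, v, hv, t, ht, u', hu', v', hv', rfl⟩
        exact AddSubgroup.subset_closure
          ⟨r * u, R.mul_mem hr hu, v, hv, t, ht, u', hu', v', hv',
            by simp only [mul_assoc]⟩))
      (fun m hm r hr => closure_stable_right r (by
        rintro g ⟨u, hu, v, hv, t, ht, u', hu', v', hv', rfl⟩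
        exact AddSubgroup.subset_closure
          ⟨u, hu, v, hv, t, ht, u', hu', v' * r, R.mul_mem hv' hr,
            by simp only [mul_assoc]⟩) m hm)
      (fun m hm m' hm' => by
        rw [closure_prod_zero hgenzero m hm m' hm']
        exact AddSubgroup.zero_mem _) with hz | hd
    · -- the ideal generated by a·I·a is zero, hence aSa = 0 and a = 0
      apply hS a
      intro x
      obtain ⟨r, hr, m, hm, rfl⟩ := hdec x
      have h1 : a * r * a = 0 := h r hr
      have h2 : a * m * a = 0 := by
        apply hz
        apply AddSubgroup.subset_closure
        exact ⟨1, R.one_mem, 1, R.one_mem, m, hm, 1, R.one_mem, 1, R.one_mem, by simp⟩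
      rw [mul_add, add_mul, h1, h2, add_zero]
    · -- otherwise I ⊆ M, so I·I = 0, contradicting hII
      exfalso
      have hIM : ∀ x, x ∈ I → x ∈ AddSubgroup.closure gen := by
        intro x hx
        obtain ⟨r, hr, m, hm, hxe⟩ := hd x
        have hmI : m ∈ I := closure_mem_ideal I hgenI m hm
        have hrI : r ∈ I := by
          have : x - m ∈ I := I.sub_mem hx hmI
          have hre : r = x - m := by rw [hxe]; abel
          rwa [← hre] at this
        have hr0 : r = 0 := hRI r hr hrI
        rw [hxe, hr0, zero_add]
        exact hm
      obtain ⟨x, hx, y, hy, hxy⟩ := hII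
      exact hxy (closure_prod_zero hgenzero x (hIM x hx) y (hIM y hy))
  · -- backward direction
    rintro ⟨hRsp, x0, hx0, y0, hy0, hxy0⟩
    intro s hs
    obtain ⟨r, hr, i, hiI, rfl⟩ := hdec s
    -- first show r = 0 using semiprimeness of R
    have hr0 : r = 0 := by
      apply hRsp r hr
      intro x hx
      have hexp : (r + i) * x * (r + i)
          = r * x * r + (r * x * i + (i * x * r + i * x * i)) := by
        simp only [add_mul, mul_add]; abel
      have hι : r * x * i + (i * x * r + i * x * i) ∈ I :=
        I.add_mem (I.mul_mem_left _ _ hiI)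
          (I.add_mem (I.mul_mem_right _ _ (I.mul_mem_right _ _ hiI))
            (I.mul_mem_left _ _ hiI))
      have h0 := hs x
      rw [hexp] at h0
      have : r * x * r = -(r * x * i + (i * x * r + i * x * i)) :=
        eq_neg_of_add_eq_zero_left h0
      exact hRI _ (R.mul_mem (R.mul_mem hr hx) hr) (this ▸ I.neg_mem hι)
    subst hr0
    simp only [zero_add] at hs ⊢
    -- now i ∈ I with i S i = 0 ; use the ideal generated by i
    set gen : Set S := {y : S | ∃ u v : S, y = u * i * v} with hgen
    have hgenI : ∀ g ∈ gen, g ∈ I := by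
      rintro g ⟨u, v, rfl⟩
      exact I.mul_mem_right _ _ (I.mul_mem_left _ _ hiI)
    have hgenzero : ∀ g ∈ gen, ∀ g' ∈ gen, g * g' = 0 := by
      rintro g ⟨u, v, rfl⟩ g' ⟨u', v', rfl⟩
      have hz : i * (v * u') * i = 0 := hs (v * u')
      calc u * i * v * (u' * i * v') = u * (i * (v * u') * i) * v' := by
            simp only [mul_assoc]
        _ = 0 := by rw [hz, mul_zero, zero_mul]
    rcases key_dichotomy R hmax I hRI (AddSubgroup.closure gen)
      (closure_mem_ideal I hgenI)
      (fun r' _ => closure_stable_left r' (by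
        rintro g ⟨u, v, rfl⟩
        exact AddSubgroup.subset_closure ⟨r' * u, v, by simp only [mul_assoc]⟩))
      (fun m hm r' _ => closure_stable_right r' (by
        rintro g ⟨u, v, rfl⟩
        exact AddSubgroup.subset_closure ⟨u, v * r', by simp only [mul_assoc]⟩) m hm)
      (fun m hm m' hm' => by
        rw [closure_prod_zero hgenzero m hm m' hm']
        exact AddSubgroup.zero_mem _) with hz | hd
    · exact hz i (AddSubgroup.subset_closure ⟨1, 1, by simp⟩)
    · exfalso
      have hIM : ∀ x, x ∈ I → x ∈ AddSubgroup.closure gen := by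
        intro x hx
        obtain ⟨r', hr', m, hm, hxe⟩ := hd x
        have hmI : m ∈ I := closure_mem_ideal I hgenI m hm
        have hrI : r' ∈ I := by
          have : x - m ∈ I := I.sub_mem hx hmI
          have hre : r' = x - m := by rw [hxe]; abel
          rwa [← hre] at this
        have hr0 : r' = 0 := hRI r' hr' hrI
        rw [hxe, hr0, zero_add]
        exact hm
      exact hxy0 (closure_prod_zero hgenzero x0 (hIM x0 hx0) y0 (hIM y0 hy0))
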